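/- Let A₁,…,A_m be real symmetric n×n matrices, x₀ ∈ ℝⁿ, X₀ = x₀x₀ᵀ, bᵢ = ⟨X₀, Aᵢ⟩, and S = {Σᵢ λᵢAᵢ + Q : λ ∈ ℝ^m, Q ⪯ 0, ⟨Q, X₀⟩ = 0}. Let q ∈ ℝⁿ satisfy qᵀx₀ = 0 and qqᵀ ∈ S. Then every feasible X is orthogonal to qqᵀ: for all symmetric X with X ⪰ 0 and ⟨X, Aᵢ⟩ = bᵢ for all i, one has ⟨X, qqᵀ⟩ = 0. -/

import Mathlib

open Matrix

lemma trace_mul_nonneg' {n : ℕ} {X P : Matrix (Fin n) (Fin n) ℝ}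
    (hX : X.PosSemidef) (hP : P.PosSemidef) : 0 ≤ (X * P).trace := by
  obtain ⟨B, rfl⟩ : ∃ B : Matrix (Fin n) (Fin n) ℝ, P = Bᴴ * B := by
    open scoped MatrixOrder in
    exact ⟨CFC.sqrt P, by rw [(CFC.sqrt_nonneg P).posSemidef.1.eq, CFC.sqrt_mul_sqrt_self P hP.nonneg]⟩
  have h1 : (X * (Bᴴ * B)).trace = (B * X * Bᴴ).trace := by
    rw [← Matrix.mul_assoc, Matrix.trace_mul_cycle]
  rw [h1]
  have h2 := hX.mul_mul_conjTranspose_same B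
  rw [Matrix.trace]
  apply Finset.sum_nonneg
  intro i _
  simpa using h2.dotProduct_mulVec_nonneg (Pi.single i 1)

lemma trace_mul_vecMulVec' {n : ℕ} (M : Matrix (Fin n) (Fin n) ℝ) (u v : Fin n → ℝ) :
    (M * vecMulVec u v).trace = v ⬝ᵥ (M *ᵥ u) := by
  simp only [Matrix.trace, Matrix.diag, Matrix.mul_apply, vecMulVec_apply, dotProduct,
    mulVec, Finset.mul_sum]
  exact Finset.sum_congr rfl fun i _ => Finset.sum_congr rfl fun j _ => by ring

lemma trace_mul_expand' {n m : ℕ} (X : Matrix (Fin n) (Fin n) ℝ)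
    (lam : Fin m → ℝ) (A : Fin m → Matrix (Fin n) (Fin n) ℝ)
    (Q : Matrix (Fin n) (Fin n) ℝ) :
    (X * ((∑ i, lam i • A i) + Q)).trace = (∑ i, lam i * (X * A i).trace) + (X * Q).trace := by
  rw [Matrix.mul_add, Matrix.trace_add, Matrix.mul_sum, Matrix.trace_sum]
  congr 1
  exact Finset.sum_congr rfl fun i _ => by rw [Matrix.mul_smul, Matrix.trace_smul, smul_eq_mul]

/-- If `q ⊥ x₀` and `qqᵀ ∈ S`, then every feasible `X` is orthogonal to `qqᵀ`
(the key step in the proofs of Theorem 5 and Lemma 1). -/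
theorem feasible_orthogonal_of_mem_S {n m : ℕ}
    (A : Fin m → Matrix (Fin n) (Fin n) ℝ)
    (x₀ : Fin n → ℝ) (X₀ : Matrix (Fin n) (Fin n) ℝ) (b : Fin m → ℝ)
    (S : Set (Matrix (Fin n) (Fin n) ℝ))
    (hX₀ : X₀ = vecMulVec x₀ x₀)
    (hb : ∀ i, b i = (X₀ * A i).trace)
    (hA : ∀ i, (A i).IsSymm)
    (hS : S = {Y : Matrix (Fin n) (Fin n) ℝ |
      ∃ (lam : Fin m → ℝ) (Q : Matrix (Fin n) (Fin n) ℝ),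
        (-Q).PosSemidef ∧ (Q * X₀).trace = 0 ∧ Y = (∑ i, lam i • A i) + Q})
    (q : Fin n → ℝ) (hq : q ⬝ᵥ x₀ = 0) (hqS : vecMulVec q q ∈ S) :
    ∀ X : Matrix (Fin n) (Fin n) ℝ, X.PosSemidef → (∀ i, (X * A i).trace = b i) →
      (X * vecMulVec q q).trace = 0 := by
  intro X hX hfeas
  rw [hS] at hqS
  obtain ⟨lam, Q, hQ, hQX₀, hEq⟩ := hqS
  -- trace (X₀ * Q) = 0
  have hX₀Q : (X₀ * Q).trace = 0 := by
    rw [Matrix.trace_mul_comm]; exact hQX₀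
  -- trace (X₀ * qqᵀ) = 0
  have hX₀qq : (X₀ * vecMulVec q q).trace = 0 := by
    rw [trace_mul_vecMulVec', hX₀]
    have : vecMulVec x₀ x₀ *ᵥ q = (x₀ ⬝ᵥ q) • x₀ := by
      ext i; simp only [mulVec, vecMulVec_apply, dotProduct, Finset.mul_sum, Pi.smul_apply, smul_eq_mul]
      rw [Finset.sum_mul]
      exact Finset.sum_congr rfl fun j _ => by ring
    rw [this, dotProduct_smul, smul_eq_mul, hq, mul_zero]
  -- the linear-part contribution vanishes
  have hsum : (∑ i, lam i * b i) = 0 := by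
    have := hX₀qq
    rw [hEq, trace_mul_expand', hX₀Q, add_zero] at this
    rw [← this]
    exact Finset.sum_congr rfl fun i _ => by rw [hb]
  -- trace (X * qqᵀ) = trace (X * Q)
  have hXqq : (X * vecMulVec q q).trace = (X * Q).trace := by
    rw [hEq, trace_mul_expand']
    have : (∑ i, lam i * (X * A i).trace) = 0 := by
      rw [← hsum]
      exact Finset.sum_congr rfl fun i _ => by rw [hfeas]
    rw [this, zero_add]
  -- trace (X * Q) ≤ 0
  have hle : (X * Q).trace ≤ 0 := by
    have h := trace_mul_nonneg' hX hQ
    rw [Matrix.mul_neg, Matrix.trace_neg] at h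
    linarith
  -- trace (X * qqᵀ) ≥ 0
  have hge : 0 ≤ (X * vecMulVec q q).trace := by
    rw [trace_mul_vecMulVec']
    simpa using hX.dotProduct_mulVec_nonneg q
  linarith [hXqq ▸ hge]
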